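/- For any bounded measurable f : ℝⁿ → ℝ and any t > 0, the function x ↦ Q_t f(x) = ∫ f(x + √t z) dγₙ(z) is real analytic on ℝⁿ. -/

import Mathlib

open MeasureTheory Real



-- integrability of exp(-c ‖v‖²)
lemma integrable_exp_neg_sq_norm (c : ℝ) (hc : 0 < c) :
    Integrable (fun v : EuclideanSpace ℝ (Fin n) => rexp (-c * ‖v‖ ^ 2)) := by
  have h := (GaussianFourier.integrable_cexp_neg_mul_sq_norm_add (V := EuclideanSpace ℝ (Fin n))
      (b := (c : ℂ)) (by simpa using hc) 0 0).norm
  refine h.congr (Filter.Eventually.of_forall fun v => ?_)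
  simp [Complex.norm_exp]
  norm_cast
  exact Or.inl rfl

-- integrability of exp(b‖y‖ - ‖y‖²/2)
lemma integrable_exp_lin_norm (b : ℝ) :
    Integrable (fun v : EuclideanSpace ℝ (Fin n) => rexp (b * ‖v‖ - ‖v‖ ^ 2 / 2)) := by
  refine Integrable.mono' ((integrable_exp_neg_sq_norm (1/4 : ℝ) (by norm_num)).const_mul
      (rexp (b ^ 2))) ?_ (Filter.Eventually.of_forall fun v => ?_)
  · exact (Continuous.rexp (by fun_prop)).aestronglyMeasurable
  · rw [Real.norm_eq_abs, abs_of_nonneg (Real.exp_nonneg _), ← Real.exp_add]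
    apply Real.exp_le_exp.2
    nlinarith [sq_nonneg (‖v‖ - 2 * b), sq_nonneg ‖v‖, norm_nonneg v]

lemma pow_le_factorial_mul_exp (s : ℝ) (hs : 0 ≤ s) (m : ℕ) :
    s ^ m ≤ (m.factorial : ℝ) * rexp s := by
  have h2 : s ^ m / (m.factorial : ℝ) ≤ rexp s := by
    refine le_trans ?_ (Real.sum_le_exp_of_nonneg hs (m + 1))
    exact Finset.single_le_sum (f := fun i => s ^ i / (i.factorial : ℝ))
      (fun i _ => by positivity) (Finset.self_mem_range_succ m)
  rw [div_le_iff₀ (by positivity)] at h2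
  linarith [h2]

noncomputable def innerPowCLM (n : ℕ) (m : ℕ) (y : EuclideanSpace ℝ (Fin n)) :
    ContinuousMultilinearMap ℝ (fun _ : Fin m => EuclideanSpace ℝ (Fin n)) ℝ :=
  (ContinuousMultilinearMap.mkPiAlgebra ℝ (Fin m) ℝ).compContinuousLinearMap
    (fun _ => innerSL ℝ y)

lemma innerPowCLM_apply (n m : ℕ) (y v : EuclideanSpace ℝ (Fin n)) :
    innerPowCLM n m y (fun _ => v) = (inner ℝ y v : ℝ) ^ m := by
  simp [innerPowCLM]

lemma innerPowCLM_norm_le (n m : ℕ) (y : EuclideanSpace ℝ (Fin n)) :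
    ‖innerPowCLM n m y‖ ≤ ‖y‖ ^ m := by
  refine le_trans (ContinuousMultilinearMap.norm_compContinuousLinearMap_le _ _) ?_
  have h1 : ∀ i : Fin m, ‖innerSL ℝ y‖ = ‖y‖ := fun _ => innerSL_apply_norm (𝕜 := ℝ) y
  rw [ContinuousMultilinearMap.norm_mkPiAlgebra, one_mul]
  rw [Finset.prod_congr rfl (fun i _ => h1 i), Finset.prod_const]
  simp

lemma innerPowCLM_continuous (n m : ℕ) :
    Continuous (fun y => innerPowCLM n m y) := by
  have h : Continuous (fun y : EuclideanSpace ℝ (Fin n) =>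
      (fun _ : Fin m => innerSL ℝ y)) :=
    continuous_pi fun i => (innerSL ℝ (E := EuclideanSpace ℝ (Fin n))).continuous
  exact ((ContinuousMultilinearMap.compContinuousLinearMapLRight
    (ContinuousMultilinearMap.mkPiAlgebra ℝ (Fin m) ℝ)).coe_continuous.comp h)


set_option maxHeartbeats 1000000 in
set_option synthInstance.maxHeartbeats 400000 in
lemma analyticAt_zero_integral_exp_inner (n : ℕ) (g : EuclideanSpace ℝ (Fin n) → ℝ)
    (hg : Measurable g) (C a : ℝ)
    (hb : ∀ y, |g y| ≤ C * rexp (a * ‖y‖ - ‖y‖ ^ 2 / 2)) :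
    AnalyticAt ℝ (fun x => ∫ y, g y * rexp (inner ℝ y x)) 0 := by
  set K : ℝ := ∫ y : EuclideanSpace ℝ (Fin n), rexp ((a + 1) * ‖y‖ - ‖y‖ ^ 2 / 2) with hK
  have hKnonneg : 0 ≤ K := integral_nonneg fun y => (Real.exp_pos _).le
  have hC : 0 ≤ C := by
    have := hb 0
    have h2 := abs_nonneg (g 0)
    nlinarith [Real.exp_pos (a * ‖(0 : EuclideanSpace ℝ (Fin n))‖ -
      ‖(0 : EuclideanSpace ℝ (Fin n))‖ ^ 2 / 2)]
  have hbd : ∀ (m : ℕ) (y : EuclideanSpace ℝ (Fin n)),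
      |g y| * ‖y‖ ^ m ≤ C * m.factorial * rexp ((a + 1) * ‖y‖ - ‖y‖ ^ 2 / 2) := by
    intro m y
    have h1 : |g y| * ‖y‖ ^ m ≤ (C * rexp (a * ‖y‖ - ‖y‖ ^ 2 / 2)) *
        ((m.factorial : ℝ) * rexp ‖y‖) :=
      mul_le_mul (hb y) (pow_le_factorial_mul_exp _ (norm_nonneg _) m)
        (by positivity) (by positivity)
    calc |g y| * ‖y‖ ^ m ≤ _ := h1
      _ = C * m.factorial * (rexp (a * ‖y‖ - ‖y‖ ^ 2 / 2) * rexp ‖y‖) := by ring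
      _ = C * m.factorial * rexp ((a + 1) * ‖y‖ - ‖y‖ ^ 2 / 2) := by
          rw [← Real.exp_add]; ring_nf
  haveI : SecondCountableTopologyEither (EuclideanSpace ℝ (Fin n))
      (ContinuousMultilinearMap ℝ (fun _ : Fin 0 => EuclideanSpace ℝ (Fin n)) ℝ) :=
    secondCountableTopologyEither_of_left _ _
  have hInt : ∀ m : ℕ, Integrable (fun y => g y • innerPowCLM n m y) := by
    intro m
    haveI : SecondCountableTopologyEither (EuclideanSpace ℝ (Fin n))
        (ContinuousMultilinearMap ℝ (fun _ : Fin m => EuclideanSpace ℝ (Fin n)) ℝ) :=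
      secondCountableTopologyEither_of_left _ _
    refine Integrable.mono' (((integrable_exp_lin_norm (a + 1)).const_mul
        (C * m.factorial))) ?_ (Filter.Eventually.of_forall fun y => ?_)
    · exact hg.aestronglyMeasurable.smul (innerPowCLM_continuous n m).aestronglyMeasurable
    · refine le_trans (norm_smul_le (g y) (innerPowCLM n m y)) ?_
      calc ‖g y‖ * ‖innerPowCLM n m y‖ ≤ |g y| * ‖y‖ ^ m := by
            rw [Real.norm_eq_abs]
            exact mul_le_mul_of_nonneg_left (innerPowCLM_norm_le n m y) (abs_nonneg _)
        _ ≤ C * m.factorial * rexp ((a + 1) * ‖y‖ - ‖y‖ ^ 2 / 2) := hbd m y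
  set p : FormalMultilinearSeries ℝ (EuclideanSpace ℝ (Fin n)) ℝ :=
    fun m => (m.factorial : ℝ)⁻¹ • ∫ y, g y • innerPowCLM n m y with hp
  have hfac : ∀ m : ℕ, ((m.factorial : ℝ)) ≠ 0 :=
    fun m => Nat.cast_ne_zero.2 m.factorial_ne_zero
  have hpnorm : ∀ m : ℕ, ‖p m‖ ≤ C * K := by
    intro m
    have h1 : ‖∫ y, g y • innerPowCLM n m y‖ ≤ C * m.factorial * K := by
      refine le_trans (norm_integral_le_integral_norm _) ?_
      rw [hK, ← integral_const_mul]
      refine integral_mono ((hInt m).norm)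
        ((integrable_exp_lin_norm (a+1)).const_mul _) fun y => ?_
      refine le_trans (norm_smul_le (g y) (innerPowCLM n m y)) ?_
      rw [Real.norm_eq_abs]
      exact le_trans (mul_le_mul_of_nonneg_left (innerPowCLM_norm_le n m y)
        (abs_nonneg _)) (hbd m y)
    rw [hp]
    refine le_trans (norm_smul_le ((m.factorial:ℝ))⁻¹ (∫ y, g y • innerPowCLM n m y)) ?_
    rw [norm_inv, Real.norm_natCast]
    calc (m.factorial : ℝ)⁻¹ * ‖∫ y, g y • innerPowCLM n m y‖
        ≤ (m.factorial : ℝ)⁻¹ * (C * m.factorial * K) :=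
          mul_le_mul_of_nonneg_left h1 (by positivity)
      _ = C * K := by field_simp
  have hrad : (1 : ENNReal) ≤ p.radius := by
    refine FormalMultilinearSeries.le_radius_of_bound p (C * K) fun m => ?_
    simpa using hpnorm m
  have hball : HasFPowerSeriesOnBall (fun x => ∫ y, g y * rexp (inner ℝ y x)) p 0 1 := by
    refine ⟨hrad, one_pos, fun {v} hv => ?_⟩
    rw [mem_emetric_ball_zero_iff] at hv
    have hvn : ‖v‖ < 1 := (ENNReal.ofReal_lt_one).1 (by rwa [ofReal_norm])
    have happ : ∀ m : ℕ, (p m fun _ => v) =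
        ∫ y, (m.factorial : ℝ)⁻¹ * (g y * (inner ℝ y v : ℝ) ^ m) := by
      intro m
      rw [hp]
      simp only [ContinuousMultilinearMap.smul_apply]
      rw [ContinuousMultilinearMap.integral_apply (hInt m), smul_eq_mul, ← integral_const_mul]
      congr 1
      ext y
      rw [ContinuousMultilinearMap.smul_apply, innerPowCLM_apply, smul_eq_mul]
    have hFint : ∀ m : ℕ, Integrable (fun y =>
        (m.factorial : ℝ)⁻¹ * (g y * (inner ℝ y v : ℝ) ^ m)) := by
      intro m
      have h0 := ((ContinuousMultilinearMap.apply ℝ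
        (fun _ : Fin m => EuclideanSpace ℝ (Fin n)) ℝ (fun _ => v)).integrable_comp (hInt m))
      refine (h0.congr (Filter.Eventually.of_forall fun y => ?_)).const_mul _
      simp only [ContinuousLinearMap.coe_coe, ContinuousMultilinearMap.apply_apply,
        Function.comp_apply, ContinuousMultilinearMap.smul_apply, innerPowCLM_apply,
        smul_eq_mul]
    have hnormint : ∀ m : ℕ, (∫ y, ‖(m.factorial : ℝ)⁻¹ * (g y * (inner ℝ y v : ℝ) ^ m)‖)
        ≤ C * K * ‖v‖ ^ m := by
      intro m
      set c₀ : ℝ := (m.factorial : ℝ)⁻¹ * (C * m.factorial) * ‖v‖ ^ m with hc₀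
      have h1 : ∀ y : EuclideanSpace ℝ (Fin n),
          ‖(m.factorial : ℝ)⁻¹ * (g y * (inner ℝ y v : ℝ) ^ m)‖ ≤
          c₀ * rexp ((a + 1) * ‖y‖ - ‖y‖ ^ 2 / 2) := by
        intro y
        rw [Real.norm_eq_abs, abs_mul, abs_mul, abs_pow, abs_inv, Nat.abs_cast]
        have h2 : |(inner ℝ y v : ℝ)| ≤ ‖y‖ * ‖v‖ := abs_real_inner_le_norm y v
        have h3 : |g y| * |(inner ℝ y v : ℝ)| ^ m ≤ |g y| * (‖y‖ ^ m * ‖v‖ ^ m) := by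
          rw [← mul_pow]
          exact mul_le_mul_of_nonneg_left (pow_le_pow_left₀ (abs_nonneg _) h2 m) (abs_nonneg _)
        have h4 : |g y| * ‖y‖ ^ m * ‖v‖ ^ m ≤
            C * m.factorial * rexp ((a + 1) * ‖y‖ - ‖y‖ ^ 2 / 2) * ‖v‖ ^ m :=
          mul_le_mul_of_nonneg_right (hbd m y) (by positivity)
        have h5 : (0:ℝ) ≤ (m.factorial : ℝ)⁻¹ := by positivity
        calc (m.factorial : ℝ)⁻¹ * (|g y| * |(inner ℝ y v : ℝ)| ^ m)
            ≤ (m.factorial : ℝ)⁻¹ * (|g y| * (‖y‖ ^ m * ‖v‖ ^ m)) :=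
              mul_le_mul_of_nonneg_left h3 h5
          _ = (m.factorial : ℝ)⁻¹ * (|g y| * ‖y‖ ^ m * ‖v‖ ^ m) := by ring
          _ ≤ (m.factorial : ℝ)⁻¹ *
              (C * m.factorial * rexp ((a + 1) * ‖y‖ - ‖y‖ ^ 2 / 2) * ‖v‖ ^ m) :=
              mul_le_mul_of_nonneg_left h4 h5
          _ = c₀ * rexp ((a + 1) * ‖y‖ - ‖y‖ ^ 2 / 2) := by rw [hc₀]; ring
      calc (∫ y, ‖(m.factorial : ℝ)⁻¹ * (g y * (inner ℝ y v : ℝ) ^ m)‖)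
          ≤ ∫ y, c₀ * rexp ((a + 1) * ‖y‖ - ‖y‖ ^ 2 / 2) := by
            exact integral_mono (hFint m).norm
              ((integrable_exp_lin_norm (a+1)).const_mul _) h1
        _ = c₀ * K := by rw [hK, integral_const_mul]
        _ = C * K * ‖v‖ ^ m := by rw [hc₀]; field_simp
    have hsummable : Summable fun m : ℕ =>
        ∫ y, ‖(m.factorial : ℝ)⁻¹ * (g y * (inner ℝ y v : ℝ) ^ m)‖ := by
      refine Summable.of_nonneg_of_le (fun m => integral_nonneg fun y => norm_nonneg _)
        (fun m => hnormint m) ?_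
      exact ((summable_geometric_of_lt_one (norm_nonneg v) hvn).mul_left (C * K))
    have hsum := hasSum_integral_of_summable_integral_norm (F := fun (m : ℕ) y =>
        (m.factorial : ℝ)⁻¹ * (g y * (inner ℝ y v : ℝ) ^ m)) hFint hsummable
    have htsum : ∀ y : EuclideanSpace ℝ (Fin n),
        (∑' m : ℕ, (m.factorial : ℝ)⁻¹ * (g y * (inner ℝ y v : ℝ) ^ m)) =
        g y * rexp (inner ℝ y v) := by
      intro y
      have h := (NormedSpace.expSeries_div_hasSum_exp ((inner ℝ y v : ℝ))).mul_left (g y)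
      rw [Real.exp_eq_exp_ℝ, ← h.tsum_eq]
      congr 1
      ext m
      ring
    rw [zero_add]
    have heq : (∫ y, ∑' m : ℕ, (m.factorial : ℝ)⁻¹ * (g y * (inner ℝ y v : ℝ) ^ m))
        = ∫ y, g y * rexp (inner ℝ y v) := by
      congr 1; ext y; exact htsum y
    rw [heq] at hsum
    have hfun : (fun m : ℕ => (p m) fun _ => v) =
        fun m : ℕ => ∫ y, (m.factorial : ℝ)⁻¹ * (g y * (inner ℝ y v : ℝ) ^ m) := funext happ
    rw [hfun]
    exact hsum
  exact hball.analyticAt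

noncomputable def stdGaussian (n : ℕ) : Measure (EuclideanSpace ℝ (Fin n)) :=
  volume.withDensity fun x =>
    ENNReal.ofReal (Real.exp (-‖x‖ ^ 2 / 2) / (2 * Real.pi) ^ ((n : ℝ) / 2))

noncomputable def heat (n : ℕ) (t : ℝ) (f : EuclideanSpace ℝ (Fin n) → ℝ)
    (x : EuclideanSpace ℝ (Fin n)) : ℝ :=
  ∫ z, f (x + Real.sqrt t • z) ∂(stdGaussian n)


lemma analyticOnNhd_integral_exp_inner (n : ℕ) (g : EuclideanSpace ℝ (Fin n) → ℝ)
    (hg : Measurable g) (C a : ℝ)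
    (hb : ∀ y, |g y| ≤ C * rexp (a * ‖y‖ - ‖y‖ ^ 2 / 2)) :
    AnalyticOnNhd ℝ (fun x => ∫ y, g y * rexp (inner ℝ y x)) Set.univ := by
  intro x₀ _
  set g' : EuclideanSpace ℝ (Fin n) → ℝ := fun y => g y * rexp (inner ℝ y x₀) with hg'def
  have hg' : Measurable g' := by
    apply hg.mul
    exact (Real.continuous_exp.comp (continuous_id.inner continuous_const)).measurable
  have hCnn : 0 ≤ C := by
    nlinarith [hb 0, abs_nonneg (g 0), Real.exp_pos (a * ‖(0 : EuclideanSpace ℝ (Fin n))‖ -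
      ‖(0 : EuclideanSpace ℝ (Fin n))‖ ^ 2 / 2)]
  have hb' : ∀ y, |g' y| ≤ C * rexp ((a + ‖x₀‖) * ‖y‖ - ‖y‖ ^ 2 / 2) := by
    intro y
    rw [hg'def, abs_mul, abs_of_nonneg (Real.exp_nonneg _)]
    have h1 : |g y| * rexp (inner ℝ y x₀) ≤
        (C * rexp (a * ‖y‖ - ‖y‖ ^ 2 / 2)) * rexp (‖x₀‖ * ‖y‖) := by
      refine mul_le_mul (hb y) ?_ (Real.exp_nonneg _) (mul_nonneg hCnn (Real.exp_nonneg _))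
      refine Real.exp_le_exp.2 ?_
      calc (inner ℝ y x₀ : ℝ) ≤ ‖y‖ * ‖x₀‖ := real_inner_le_norm y x₀
        _ = ‖x₀‖ * ‖y‖ := by ring
    refine h1.trans (le_of_eq ?_)
    rw [mul_assoc, ← Real.exp_add]
    ring_nf
  have h0 := analyticAt_zero_integral_exp_inner n g' hg' C (a + ‖x₀‖) hb'
  have hsub : AnalyticAt ℝ (fun x : EuclideanSpace ℝ (Fin n) => x - x₀) x₀ :=
    (analyticAt_id).sub analyticAt_const
  have hcomp : AnalyticAt ℝ
      (fun x : EuclideanSpace ℝ (Fin n) => ∫ y, g' y * rexp (inner ℝ y (x - x₀))) x₀ := by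
    have h2 := AnalyticAt.comp (g := fun v : EuclideanSpace ℝ (Fin n) =>
        ∫ y, g' y * rexp (inner ℝ y v)) (f := fun x : EuclideanSpace ℝ (Fin n) => x - x₀)
      (by simpa using h0) hsub
    simpa [Function.comp_def] using h2
  have heq : (fun x : EuclideanSpace ℝ (Fin n) => ∫ y, g y * rexp (inner ℝ y x)) =
      fun x => ∫ y, g' y * rexp (inner ℝ y (x - x₀)) := by
    funext x
    congr 1
    funext y
    rw [hg'def, mul_assoc, ← Real.exp_add, inner_sub_right]
    ring_nf
  rw [heq]
  exact hcomp

lemma heat_eq (n : ℕ) (t : ℝ) (ht : 0 < t) (f : EuclideanSpace ℝ (Fin n) → ℝ)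
    (x : EuclideanSpace ℝ (Fin n)) :
    heat n t f x = rexp (-(inner ℝ ((Real.sqrt t)⁻¹ • x) ((Real.sqrt t)⁻¹ • x) : ℝ) / 2) *
      ∫ y, (f (Real.sqrt t • y) * (rexp (-‖y‖ ^ 2 / 2) / (2 * π) ^ ((n : ℝ) / 2))) *
        rexp (inner ℝ y ((Real.sqrt t)⁻¹ • x)) := by
  set c : ℝ := (2 * π) ^ ((n : ℝ) / 2) with hc
  have hcpos : 0 < c := Real.rpow_pos_of_pos (by positivity) _
  set u : EuclideanSpace ℝ (Fin n) := (Real.sqrt t)⁻¹ • x with hu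
  have hst : Real.sqrt t ≠ 0 := ne_of_gt (Real.sqrt_pos.2 ht)
  have hrm : Measurable fun z : EuclideanSpace ℝ (Fin n) =>
      (rexp (-‖z‖ ^ 2 / 2) / c).toNNReal := by
    apply Measurable.real_toNNReal
    exact ((Real.continuous_exp.comp (by fun_prop)).div_const c).measurable
  rw [heat, stdGaussian]
  rw [show (fun z : EuclideanSpace ℝ (Fin n) => ENNReal.ofReal (rexp (-‖z‖ ^ 2 / 2) / c)) =
    (fun z : EuclideanSpace ℝ (Fin n) => ((rexp (-‖z‖ ^ 2 / 2) / c).toNNReal : ENNReal)) from rfl]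
  rw [integral_withDensity_eq_integral_smul hrm]
  rw [← integral_sub_right_eq_self
    (fun z => (rexp (-‖z‖ ^ 2 / 2) / c).toNNReal • f (x + Real.sqrt t • z)) u]
  rw [← integral_const_mul]
  congr 1
  funext y
  have h1 : x + Real.sqrt t • (y - u) = Real.sqrt t • y := by
    rw [smul_sub, hu, smul_smul, mul_inv_cancel₀ hst, one_smul]
    abel
  rw [h1, NNReal.smul_def, smul_eq_mul, Real.coe_toNNReal _ (by positivity)]
  have h3 : -‖y - u‖ ^ 2 / 2 = -(inner ℝ u u : ℝ) / 2 + (-‖y‖ ^ 2 / 2 + (inner ℝ y u : ℝ)) := by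
    rw [norm_sub_sq_real, real_inner_self_eq_norm_sq]
    ring
  rw [h3, Real.exp_add, Real.exp_add]
  ring

theorem stmt_5 (n : ℕ) (t : ℝ) (ht : 0 < t) (f : EuclideanSpace ℝ (Fin n) → ℝ)
    (hf : Measurable f) (hfb : ∃ C, ∀ x, |f x| ≤ C) :
    AnalyticOnNhd ℝ (heat n t f) Set.univ := by
  obtain ⟨C, hC⟩ := hfb
  set c : ℝ := (2 * π) ^ ((n : ℝ) / 2) with hc
  have hcpos : 0 < c := Real.rpow_pos_of_pos (by positivity) _
  set g : EuclideanSpace ℝ (Fin n) → ℝ :=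
    fun y => f (Real.sqrt t • y) * (rexp (-‖y‖ ^ 2 / 2) / c) with hgdef
  have hg : Measurable g := by
    apply (hf.comp (measurable_const_smul _)).mul
    exact ((Real.continuous_exp.comp (by fun_prop)).div_const c).measurable
  have hb : ∀ y, |g y| ≤ (C / c) * rexp (0 * ‖y‖ - ‖y‖ ^ 2 / 2) := by
    intro y
    rw [hgdef, abs_mul, abs_of_nonneg (by positivity : (0:ℝ) ≤ rexp (-‖y‖ ^ 2 / 2) / c)]
    rw [zero_mul, zero_sub]
    calc |f (Real.sqrt t • y)| * (rexp (-‖y‖ ^ 2 / 2) / c)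
        ≤ C * (rexp (-‖y‖ ^ 2 / 2) / c) :=
          mul_le_mul_of_nonneg_right (hC _) (by positivity)
      _ = (C / c) * rexp (-(‖y‖ ^ 2 / 2)) := by rw [neg_div]; ring
  have hG := analyticOnNhd_integral_exp_inner n g hg (C / c) 0 hb
  intro x _
  rw [show heat n t f = fun x =>
      rexp (-(inner ℝ ((Real.sqrt t)⁻¹ • x) ((Real.sqrt t)⁻¹ • x) : ℝ) / 2) *
      ∫ y, g y * rexp (inner ℝ y ((Real.sqrt t)⁻¹ • x)) from funext (heat_eq n t ht f)]
  have hlin : AnalyticAt ℝ (fun x : EuclideanSpace ℝ (Fin n) => (Real.sqrt t)⁻¹ • x) x :=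
    analyticAt_const.smul analyticAt_id (f := fun _ => (Real.sqrt t)⁻¹)
  have hinner : AnalyticAt ℝ (fun x : EuclideanSpace ℝ (Fin n) =>
      (inner ℝ ((Real.sqrt t)⁻¹ • x) ((Real.sqrt t)⁻¹ • x) : ℝ)) x := by
    have hbil := (innerSL ℝ (E := EuclideanSpace ℝ (Fin n))).analyticAt_bilinear
      ((Real.sqrt t)⁻¹ • x, (Real.sqrt t)⁻¹ • x)
    have h2 := AnalyticAt.comp (g := fun p : EuclideanSpace ℝ (Fin n) × EuclideanSpace ℝ (Fin n) =>
        (inner ℝ p.1 p.2 : ℝ)) (f := fun x : EuclideanSpace ℝ (Fin n) =>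
        ((Real.sqrt t)⁻¹ • x, (Real.sqrt t)⁻¹ • x)) (by exact hbil) (hlin.prod hlin)
    simpa [Function.comp_def] using h2
  have hexp : AnalyticAt ℝ (fun x : EuclideanSpace ℝ (Fin n) =>
      rexp (-(inner ℝ ((Real.sqrt t)⁻¹ • x) ((Real.sqrt t)⁻¹ • x) : ℝ) / 2)) x := by
    exact AnalyticAt.rexp ((hinner.neg).div analyticAt_const (by norm_num))
  exact hexp.mul ((hG _ (Set.mem_univ _)).comp hlin)
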